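/- Let H be a complex Hilbert space, let B ∈ B(H) be self-adjoint, let a ∈ B(H), let f : ℝ → ℂ be a Schwartz function, and let s > 0. Write f(sB) for the continuous functional calculus of B applied to the function t ↦ f(st), and similarly f'(sB) for t ↦ f'(st). Then ‖[f(sB), a] − s·f'(sB)·[B,a]‖ ≤ s²·‖𝓕(f'')‖_{L¹(ℝ)}·‖[B,[B,a]]‖ and ‖[f(sB), a] − s·[B,a]·f'(sB)‖ ≤ s²·‖𝓕(f'')‖_{L¹(ℝ)}·‖[B,[B,a]]‖. -/

import Mathlib

open scoped FourierTransform

noncomputable section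

open scoped Real RealInnerProductSpace
open Complex MeasureTheory Asymptotics intervalIntegral

namespace Stmt10Aux

variable {H : Type} [NormedAddCommGroup H] [InnerProductSpace ℂ H] [CompleteSpace H]

/-- the scalar exponential as a function on `ℂ` (via the real part) -/
def u (t : ℝ) : ℂ → ℂ := fun w => Complex.exp (Complex.I * t * w.re)

lemma u_cont (t : ℝ) : Continuous (u t) := by unfold u; fun_prop

lemma u_norm (t : ℝ) (w : ℂ) : ‖u t w‖ = 1 := by
  have : Complex.I * t * w.re = ((t * w.re : ℝ) : ℂ) * Complex.I := by push_cast; ring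
  rw [u, this, Complex.norm_exp_ofReal_mul_I]

lemma u_add (t t' : ℝ) (w : ℂ) : u t w * u t' w = u (t + t') w := by
  rw [u, u, u, ← Complex.exp_add]; congr 1; push_cast; ring


variable (B : H →L[ℂ] H)

/-- the unitary group generated by `B` -/
def U (t : ℝ) : H →L[ℂ] H := cfc (u t) B

variable {B}
variable (hB : IsSelfAdjoint B)
include hB

lemma U_zero : U B 0 = 1 := by
  have := hB.isStarNormal
  have h : u 0 = fun _ : ℂ => (1 : ℂ) := by
    funext w; simp [u]
  rw [U, h]
  simpa using cfc_const (1 : ℂ) B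

lemma U_mul (t t' : ℝ) : U B t * U B t' = U B (t + t') := by
  have := hB.isStarNormal
  rw [U, U, U, ← cfc_mul (u t) (u t') B ((u_cont t).continuousOn) ((u_cont t').continuousOn)]
  exact cfc_congr fun w _ => u_add t t' w

lemma U_norm_le (t : ℝ) : ‖U B t‖ ≤ 1 := by
  have := hB.isStarNormal
  exact norm_cfc_le zero_le_one fun w _ => le_of_eq (u_norm t w)

lemma B_eq_cfc : B = cfc (fun w : ℂ => (w.re : ℂ)) B := by
  have := hB.isStarNormal
  conv_lhs => rw [← cfc_id ℂ B]
  exact cfc_congr fun w hw => hB.mem_spectrum_eq_re hw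

lemma B_mul_U (t : ℝ) : B * U B t = cfc (fun w : ℂ => (w.re : ℂ) * u t w) B := by
  have := hB.isStarNormal
  rw [U, cfc_mul _ _ B (by fun_prop) ((u_cont t).continuousOn), ← B_eq_cfc hB]

lemma U_mul_B (t : ℝ) : U B t * B = B * U B t := by
  have := hB.isStarNormal
  rw [B_mul_U hB, U,
    show (fun w : ℂ => (w.re : ℂ) * u t w) = fun w : ℂ => u t w * (w.re : ℂ) from
      funext fun w => mul_comm _ _,
    cfc_mul _ _ B ((u_cont t).continuousOn) (by fun_prop), ← B_eq_cfc hB]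


lemma U_approx (t h : ℝ) (hh : |h| * ‖B‖ ≤ 1) :
    ‖U B (t + h) - U B t - h • (Complex.I • (B * U B t))‖ ≤ ‖B‖ ^ 2 * h ^ 2 := by
  have := hB.isStarNormal
  have key : U B (t + h) - U B t - h • (Complex.I • (B * U B t)) =
      cfc (fun w : ℂ => u (t + h) w - u t w - ((h : ℂ) * Complex.I) • ((w.re : ℂ) * u t w)) B := by
    rw [cfc_sub (fun w : ℂ => u (t + h) w - u t w) (fun w : ℂ => ((h:ℂ) * Complex.I) • ((w.re : ℂ) * u t w)) B
        (Continuous.continuousOn (by have := u_cont (t+h); have := u_cont t; fun_prop))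
        (Continuous.continuousOn (by have := u_cont t; fun_prop))]
    rw [cfc_sub _ _ B ((u_cont (t+h)).continuousOn) ((u_cont t).continuousOn)]
    rw [cfc_smul ((h : ℂ) * Complex.I) _ B (show ContinuousOn (fun w : ℂ => (w.re : ℂ) * u t w) (spectrum ℂ B) by exact ((Complex.continuous_ofReal.comp Complex.continuous_re).mul (u_cont t)).continuousOn)]
    rw [← B_mul_U hB, U, U]
    congr 1
    rw [← smul_assoc, Complex.real_smul]
  rw [key]
  apply norm_cfc_le (by positivity)
  intro w hw
  have hre : |w.re| ≤ ‖B‖ := by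
    have h1 := spectrum.norm_le_norm_mul_of_mem hw
    have h2 : ‖(1 : H →L[ℂ] H)‖ ≤ 1 := by
      rw [ContinuousLinearMap.one_def]; exact ContinuousLinearMap.norm_id_le
    have h3 : ‖w‖ ≤ ‖B‖ := by nlinarith [norm_nonneg B, norm_nonneg w]
    exact le_trans (Complex.abs_re_le_norm w) h3
  have h1 : u (t + h) w - u t w - ((h : ℂ) * Complex.I) • ((w.re : ℂ) * u t w)
      = u t w * (Complex.exp (Complex.I * h * w.re) - 1 - Complex.I * h * w.re) := by
    rw [show ((h:ℂ) * Complex.I) • ((w.re : ℂ) * u t w) = (Complex.I * h * w.re) * u t w by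
      rw [smul_eq_mul]; ring]
    rw [show (t + h : ℝ) = h + t by ring, ← u_add h t]
    unfold u; ring
  rw [h1, norm_mul, u_norm, one_mul]
  have habs : ‖Complex.I * h * w.re‖ ≤ 1 := by
    rw [norm_mul, norm_mul, Complex.norm_I, one_mul, Complex.norm_real, Complex.norm_real,
      Real.norm_eq_abs, Real.norm_eq_abs]
    calc |h| * |w.re| ≤ |h| * ‖B‖ := by
          exact mul_le_mul_of_nonneg_left hre (abs_nonneg h)
      _ ≤ 1 := hh
  calc ‖Complex.exp (Complex.I * h * w.re) - 1 - Complex.I * h * w.re‖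
      ≤ ‖Complex.I * h * w.re‖ ^ 2 := Complex.norm_exp_sub_one_sub_id_le habs
    _ ≤ ‖B‖ ^ 2 * h ^ 2 := by
        rw [norm_mul, norm_mul, Complex.norm_I, one_mul, Complex.norm_real, Complex.norm_real,
          Real.norm_eq_abs, Real.norm_eq_abs]
        rw [mul_pow]
        calc |h| ^ 2 * |w.re| ^ 2 ≤ |h| ^ 2 * ‖B‖ ^ 2 := by
              apply mul_le_mul_of_nonneg_left _ (by positivity)
              exact pow_le_pow_left₀ (abs_nonneg _) hre 2
          _ = ‖B‖ ^ 2 * h ^ 2 := by rw [_root_.sq_abs]; ring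

lemma hasDerivAt_U (t : ℝ) : HasDerivAt (U B) (Complex.I • (B * U B t)) t := by
  rw [hasDerivAt_iff_isLittleO]
  have big : (fun t' => U B t' - U B t - (t' - t) • (Complex.I • (B * U B t)))
      =O[nhds t] (fun t' => ‖t' - t‖ ^ 2) := by
    rw [isBigO_iff]
    refine ⟨‖B‖ ^ 2, ?_⟩
    have hev : ∀ᶠ t' in nhds t, |t' - t| * ‖B‖ ≤ 1 := by
      filter_upwards [Metric.ball_mem_nhds t (show (0:ℝ) < 1/(‖B‖+1) by positivity)] with t' ht'
      rw [Metric.mem_ball, Real.dist_eq] at ht'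
      have hb : (0:ℝ) ≤ ‖B‖ := norm_nonneg B
      have habs : (0:ℝ) ≤ |t' - t| := abs_nonneg _
      rw [lt_div_iff₀ (by positivity)] at ht'
      nlinarith
    filter_upwards [hev] with t' ht'
    have := U_approx hB t (t' - t) ht'
    rw [show t + (t' - t) = t' by ring] at this
    calc ‖U B t' - U B t - (t' - t) • (Complex.I • (B * U B t))‖
        ≤ ‖B‖ ^ 2 * (t' - t) ^ 2 := this
      _ = ‖B‖ ^ 2 * ‖‖t' - t‖ ^ 2‖ := by
          rw [Real.norm_eq_abs, Real.norm_eq_abs, _root_.abs_of_nonneg (by positivity : (0:ℝ) ≤ |t' - t| ^ 2), _root_.sq_abs]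
  refine big.trans_isLittleO ?_
  have := isLittleO_pow_sub_sub (E' := ℝ) t (m := 2) one_lt_two
  simpa using this

lemma contU : Continuous (U B) :=
  continuous_iff_continuousAt.mpr fun t => (hasDerivAt_U hB t).continuousAt


/-- Duhamel formula for the commutator. -/
lemma comm_integral (x : H →L[ℂ] H) (t : ℝ) :
    U B t * x - x * U B t
      = Complex.I • ∫ v in (0:ℝ)..t, U B (t - v) * (B * x - x * B) * U B v := by
  set G : ℝ → H →L[ℂ] H := fun v => U B (t - v) * x * U B v with hG
  have hderiv : ∀ v : ℝ,
      HasDerivAt G (Complex.I • (U B (t - v) * (x * B - B * x) * U B v)) v := by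
    intro v
    have h1 : HasDerivAt (fun v : ℝ => U B (t - v))
        ((-1 : ℝ) • (Complex.I • (B * U B (t - v)))) v := by
      exact HasDerivAt.scomp v (hasDerivAt_U hB (t - v)) ((hasDerivAt_id v).const_sub t)
    have h2 := ((h1.mul_const x).mul (hasDerivAt_U hB v))
    refine h2.congr_deriv ?_
    symm
    have hcomm : B * U B (t - v) = U B (t - v) * B := (U_mul_B hB (t - v)).symm
    rw [neg_one_smul, hcomm]
    simp only [neg_smul, neg_mul, smul_mul_assoc, mul_smul_comm, ← smul_neg, ← smul_add]
    congr 1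
    noncomm_ring
  have hcont : Continuous fun v => Complex.I • (U B (t - v) * (x * B - B * x) * U B v) := by
    have hc := contU hB
    fun_prop
  have hFTC := intervalIntegral.integral_eq_sub_of_hasDerivAt
    (f := G) (f' := fun v => Complex.I • (U B (t - v) * (x * B - B * x) * U B v))
    (a := 0) (b := t) (fun v _ => hderiv v) (hcont.intervalIntegrable 0 t)
  have hG0 : G 0 = U B t * x := by simp [hG, U_zero hB]
  have hGt : G t = x * U B t := by simp [hG, U_zero hB]
  rw [hG0, hGt] at hFTC
  rw [intervalIntegral.integral_smul] at hFTC
  have hneg : (fun v => U B (t - v) * (B * x - x * B) * U B v)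
      = fun v => -(U B (t - v) * (x * B - B * x) * U B v) := by
    funext v; noncomm_ring
  rw [hneg, intervalIntegral.integral_neg, smul_neg, hFTC, neg_sub]

lemma bound1 (x : H →L[ℂ] H) (t : ℝ) :
    ‖U B t * x - x * U B t‖ ≤ |t| * ‖B * x - x * B‖ := by
  rw [comm_integral hB x t, norm_smul, Complex.norm_I, one_mul]
  have := intervalIntegral.norm_integral_le_of_norm_le_const
    (a := 0) (b := t) (C := ‖B * x - x * B‖)
    (f := fun v => U B (t - v) * (B * x - x * B) * U B v) ?_
  · simpa [mul_comm] using this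
  · intro v _
    calc ‖U B (t - v) * (B * x - x * B) * U B v‖
        ≤ ‖U B (t - v) * (B * x - x * B)‖ * ‖U B v‖ := norm_mul_le _ _
      _ ≤ ‖U B (t - v)‖ * ‖B * x - x * B‖ * ‖U B v‖ := by
          exact mul_le_mul_of_nonneg_right (norm_mul_le _ _) (norm_nonneg _)
      _ ≤ 1 * ‖B * x - x * B‖ * 1 := by
          gcongr
          · exact U_norm_le hB (t - v)
          · exact U_norm_le hB v
      _ = ‖B * x - x * B‖ := by ring

omit hB in
lemma abs_le_of_uIoc {t v : ℝ} (hv : v ∈ Set.uIoc 0 t) : |v| ≤ |t| ∧ |t - v| ≤ |t| := by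
  rcases le_total 0 t with h | h
  · rw [Set.uIoc_of_le h] at hv
    obtain ⟨h1, h2⟩ := hv
    rw [_root_.abs_of_nonneg h, _root_.abs_of_pos h1, _root_.abs_of_nonneg (by linarith : (0:ℝ) ≤ t - v)]
    exact ⟨h2, by linarith⟩
  · rw [Set.uIoc_comm, Set.uIoc_of_le h] at hv
    obtain ⟨h1, h2⟩ := hv
    rw [_root_.abs_of_nonpos h, _root_.abs_of_nonpos h2, _root_.abs_of_nonpos (by linarith : t - v ≤ 0)]
    exact ⟨by linarith, by linarith⟩

lemma bound2L (x : H →L[ℂ] H) (t : ℝ) :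
    ‖U B t * x - x * U B t - (Complex.I * t) • (U B t * (B * x - x * B))‖
      ≤ t ^ 2 * ‖B * (B * x - x * B) - (B * x - x * B) * B‖ := by
  set C := B * x - x * B with hC
  have hconst : (Complex.I * t) • (U B t * C)
      = Complex.I • ∫ v in (0:ℝ)..t, U B t * C := by
    rw [intervalIntegral.integral_const, sub_zero, mul_smul,
      show ((t:ℝ):ℂ) = algebraMap ℝ ℂ t from rfl, algebraMap_smul]
  rw [comm_integral hB x t, hconst, ← smul_sub]
  have hint1 : IntervalIntegrable (fun v => U B (t - v) * C * U B v) volume 0 t := by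
    have hc := contU hB
    exact (by fun_prop : Continuous fun v => U B (t - v) * C * U B v).intervalIntegrable 0 t
  have hint2 : IntervalIntegrable (fun _ : ℝ => U B t * C) volume 0 t :=
    intervalIntegrable_const
  rw [← intervalIntegral.integral_sub hint1 hint2, norm_smul, Complex.norm_I, one_mul]
  have key : ∀ v ∈ Set.uIoc (0:ℝ) t,
      ‖U B (t - v) * C * U B v - U B t * C‖ ≤ |t| * ‖B * C - C * B‖ := by
    intro v hv
    have hUt : U B t * C = U B (t - v) * (U B v * C) := by
      rw [← mul_assoc, U_mul hB (t - v) v]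
      congr 2
      ring
    rw [hUt, mul_assoc, ← mul_sub]
    calc ‖U B (t - v) * (C * U B v - U B v * C)‖
        ≤ ‖U B (t - v)‖ * ‖C * U B v - U B v * C‖ := norm_mul_le _ _
      _ ≤ 1 * ‖C * U B v - U B v * C‖ := by
          exact mul_le_mul_of_nonneg_right (U_norm_le hB _) (norm_nonneg _)
      _ = ‖U B v * C - C * U B v‖ := by rw [one_mul, norm_sub_rev]
      _ ≤ |v| * ‖B * C - C * B‖ := bound1 hB C v
      _ ≤ |t| * ‖B * C - C * B‖ := by
          exact mul_le_mul_of_nonneg_right (abs_le_of_uIoc hv).1 (norm_nonneg _)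
  calc ‖∫ v in (0:ℝ)..t, (U B (t - v) * C * U B v - U B t * C)‖
      ≤ |t| * ‖B * C - C * B‖ * |t - 0| :=
        intervalIntegral.norm_integral_le_of_norm_le_const key
    _ = t ^ 2 * ‖B * C - C * B‖ := by
        rw [sub_zero, show |t| * ‖B * C - C * B‖ * |t| = |t| ^ 2 * ‖B * C - C * B‖ from by ring,
          _root_.sq_abs]
    _ = t ^ 2 * ‖B * (B * x - x * B) - (B * x - x * B) * B‖ := by rw [hC]

lemma bound2R (x : H →L[ℂ] H) (t : ℝ) :
    ‖U B t * x - x * U B t - (Complex.I * t) • ((B * x - x * B) * U B t)‖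
      ≤ t ^ 2 * ‖B * (B * x - x * B) - (B * x - x * B) * B‖ := by
  set C := B * x - x * B with hC
  have hconst : (Complex.I * t) • (C * U B t)
      = Complex.I • ∫ v in (0:ℝ)..t, C * U B t := by
    rw [intervalIntegral.integral_const, sub_zero, mul_smul,
      show ((t:ℝ):ℂ) = algebraMap ℝ ℂ t from rfl, algebraMap_smul]
  rw [comm_integral hB x t, hconst, ← smul_sub]
  have hint1 : IntervalIntegrable (fun v => U B (t - v) * C * U B v) volume 0 t := by
    have hc := contU hB
    exact (by fun_prop : Continuous fun v => U B (t - v) * C * U B v).intervalIntegrable 0 t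
  have hint2 : IntervalIntegrable (fun _ : ℝ => C * U B t) volume 0 t :=
    intervalIntegrable_const
  rw [← intervalIntegral.integral_sub hint1 hint2, norm_smul, Complex.norm_I, one_mul]
  have key : ∀ v ∈ Set.uIoc (0:ℝ) t,
      ‖U B (t - v) * C * U B v - C * U B t‖ ≤ |t| * ‖B * C - C * B‖ := by
    intro v hv
    have hUt : C * U B t = C * U B (t - v) * U B v := by
      rw [mul_assoc, U_mul hB (t - v) v]
      congr 2
      ring
    rw [hUt, ← sub_mul]
    calc ‖(U B (t - v) * C - C * U B (t - v)) * U B v‖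
        ≤ ‖U B (t - v) * C - C * U B (t - v)‖ * ‖U B v‖ := norm_mul_le _ _
      _ ≤ ‖U B (t - v) * C - C * U B (t - v)‖ * 1 := by
          exact mul_le_mul_of_nonneg_left (U_norm_le hB _) (norm_nonneg _)
      _ = ‖U B (t - v) * C - C * U B (t - v)‖ := mul_one _
      _ ≤ |t - v| * ‖B * C - C * B‖ := bound1 hB C (t - v)
      _ ≤ |t| * ‖B * C - C * B‖ := by
          exact mul_le_mul_of_nonneg_right (abs_le_of_uIoc hv).2 (norm_nonneg _)
  calc ‖∫ v in (0:ℝ)..t, (U B (t - v) * C * U B v - C * U B t)‖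
      ≤ |t| * ‖B * C - C * B‖ * |t - 0| :=
        intervalIntegral.norm_integral_le_of_norm_le_const key
    _ = t ^ 2 * ‖B * C - C * B‖ := by
        rw [sub_zero, show |t| * ‖B * C - C * B‖ * |t| = |t| ^ 2 * ‖B * C - C * B‖ from by ring,
          _root_.sq_abs]
    _ = t ^ 2 * ‖B * (B * x - x * B) - (B * x - x * B) * B‖ := by rw [hC]


lemma cfc_schwartz (g : SchwartzMap ℝ ℂ) (s : ℝ) :
    cfc (fun w : ℂ => g (s * w.re)) B = ∫ ξ : ℝ, (𝓕 ⇑g ξ) • U B (2 * π * s * ξ) := by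
  have hnorm := hB.isStarNormal
  -- the functional calculus as a continuous linear map
  let Φ : C(spectrum ℂ B, ℂ) →L[ℂ] (H →L[ℂ] H) :=
    { toLinearMap := ((cfcHom hnorm (R := ℂ)).toAlgHom.toLinearMap)
      cont := cfcHom_continuous hnorm }
  have hΦ : ∀ φ : C(spectrum ℂ B, ℂ), Φ φ = cfcHom hnorm φ := fun φ => rfl
  -- the exponential family as a jointly continuous map
  let E : C(ℝ × spectrum ℂ B, ℂ) :=
    ⟨fun p => u (2 * π * s * p.1) p.2, by
      unfold u
      have : Continuous fun p : ℝ × spectrum ℂ B => (p.2 : ℂ) := by fun_prop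
      fun_prop⟩
  let F : ℝ → C(spectrum ℂ B, ℂ) := fun ξ => 𝓕 ⇑g ξ • E.curry ξ
  have hgi : Integrable (𝓕 ⇑g) volume :=
    (SchwartzMap.fourierTransformCLM ℂ g).integrable
  have h𝓕cont : Continuous (𝓕 ⇑g) := (SchwartzMap.fourierTransformCLM ℂ g).continuous
  have hEnorm : ∀ ξ : ℝ, ‖E.curry ξ‖ ≤ 1 := by
    intro ξ
    rw [ContinuousMap.norm_le _ zero_le_one]
    intro w
    exact le_of_eq (u_norm _ _)
  have hFcont : Continuous F := h𝓕cont.smul (map_continuous E.curry)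
  have hFint : Integrable F volume := by
    refine Integrable.mono' hgi.norm hFcont.aestronglyMeasurable ?_
    refine Filter.Eventually.of_forall fun ξ => ?_
    show ‖𝓕 ⇑g ξ • E.curry ξ‖ ≤ _
    refine (ContinuousMap.norm_le _ (norm_nonneg _)).mpr fun w => ?_
    rw [ContinuousMap.smul_apply, smul_eq_mul, norm_mul,
      show E.curry ξ w = u (2 * π * s * ξ) w from rfl, u_norm, mul_one]
  -- the target continuous map
  have hTcont : Continuous (fun w : spectrum ℂ B => g (s * (w : ℂ).re)) := by
    have : Continuous fun w : spectrum ℂ B => (w : ℂ) := by fun_prop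
    have hgc := g.continuous
    fun_prop
  set T : C(spectrum ℂ B, ℂ) := ⟨fun w => g (s * (w : ℂ).re), hTcont⟩ with hT
  have htarget : (∫ ξ : ℝ, F ξ) = T := by
    ext w
    rw [ContinuousMap.integral_apply hFint w]
    have hinv := g.continuous.fourierInv_fourier_eq g.integrable hgi
    have key : (∫ ξ : ℝ, F ξ w) = 𝓕⁻ (𝓕 ⇑g) (s * (w : ℂ).re) := by
      rw [Real.fourierInv_eq']
      apply MeasureTheory.integral_congr_ae
      refine Filter.Eventually.of_forall fun ξ => ?_
      show 𝓕 ⇑g ξ • u (2 * π * s * ξ) w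
          = Complex.exp ((((2 * π * (inner ℝ ξ (s * (w : ℂ).re) : ℝ)) : ℝ) : ℂ) * Complex.I)
              • 𝓕 ⇑g ξ
      rw [smul_eq_mul, smul_eq_mul, mul_comm]
      congr 1
      unfold u
      congr 1
      simp only [RCLike.inner_apply, conj_trivial]
      push_cast
      ring
    rw [key, hinv]
    rfl
  -- continuity of the cfc argument
  have hcont : ContinuousOn (fun w : ℂ => (g (s * w.re) : ℂ)) (spectrum ℂ B) := by
    have hgc := g.continuous
    have : Continuous fun w : ℂ => (g (s * w.re) : ℂ) := by fun_prop
    exact this.continuousOn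
  rw [cfc_apply (fun w : ℂ => (g (s * w.re) : ℂ)) B hnorm hcont]
  have h1 : cfcHom hnorm ⟨_, hcont.restrict⟩ = Φ T := by
    rw [hΦ]
    congr 1
  rw [h1, ← htarget, ← ContinuousLinearMap.integral_comp_comm Φ hFint]
  apply MeasureTheory.integral_congr_ae
  refine Filter.Eventually.of_forall fun ξ => ?_
  show Φ (𝓕 ⇑g ξ • E.curry ξ) = 𝓕 ⇑g ξ • U B (2 * π * s * ξ)
  rw [Φ.map_smul]
  congr 1
  rw [hΦ, U, cfc_apply (u (2 * π * s * ξ)) B hnorm (u_cont _).continuousOn]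
  congr 1


lemma int_base (g : SchwartzMap ℝ ℂ) (s : ℝ) :
    Integrable (fun ξ : ℝ => (𝓕 ⇑g ξ) • U B (2 * π * s * ξ)) volume := by
  have hgi : Integrable (𝓕 ⇑g) volume := (SchwartzMap.fourierTransformCLM ℂ g).integrable
  have h𝓕cont : Continuous (𝓕 ⇑g) := (SchwartzMap.fourierTransformCLM ℂ g).continuous
  have hUcont : Continuous fun ξ : ℝ => U B (2 * π * s * ξ) :=
    (contU hB).comp (by fun_prop)
  haveI : SecondCountableTopologyEither ℝ (H →L[ℂ] H) :=
    { out := Or.inl inferInstance }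
  refine Integrable.mono' hgi.norm (h𝓕cont.smul hUcont).aestronglyMeasurable ?_
  refine Filter.Eventually.of_forall fun ξ => ?_
  rw [norm_smul]
  calc ‖𝓕 ⇑g ξ‖ * ‖U B (2 * π * s * ξ)‖ ≤ ‖𝓕 ⇑g ξ‖ * 1 :=
        mul_le_mul_of_nonneg_left (U_norm_le hB _) (norm_nonneg _)
    _ = ‖𝓕 ⇑g ξ‖ := mul_one _

set_option maxHeartbeats 1000000 in
theorem main (a : H →L[ℂ] H) (f : SchwartzMap ℝ ℂ) (s : ℝ) :
    ‖(cfc (fun w : ℂ => f (s * w.re)) B * a - a * cfc (fun w : ℂ => f (s * w.re)) B)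
        - s • (cfc (fun w : ℂ => deriv (⇑f) (s * w.re)) B * (B * a - a * B))‖
      ≤ s ^ 2 * (∫ ξ : ℝ, ‖𝓕 (deriv (deriv ⇑f)) ξ‖) *
          ‖B * (B * a - a * B) - (B * a - a * B) * B‖ ∧
    ‖(cfc (fun w : ℂ => f (s * w.re)) B * a - a * cfc (fun w : ℂ => f (s * w.re)) B)
        - s • ((B * a - a * B) * cfc (fun w : ℂ => deriv (⇑f) (s * w.re)) B)‖
      ≤ s ^ 2 * (∫ ξ : ℝ, ‖𝓕 (deriv (deriv ⇑f)) ξ‖) *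
          ‖B * (B * a - a * B) - (B * a - a * B) * B‖ := by
  set C : H →L[ℂ] H := B * a - a * B with hC
  set D : H →L[ℂ] H := B * C - C * B with hD
  set φ : ℝ → ℂ := 𝓕 ⇑f with hφ
  -- derivatives as Schwartz maps
  have hd : deriv ⇑f = ⇑(SchwartzMap.derivCLM ℝ ℂ f) :=
    funext fun x => (SchwartzMap.derivCLM_apply ℝ f x).symm
  have hd2 : deriv (deriv ⇑f) = ⇑(SchwartzMap.derivCLM ℝ ℂ (SchwartzMap.derivCLM ℝ ℂ f)) := by
    rw [hd]
    exact funext fun x => (SchwartzMap.derivCLM_apply ℝ _ x).symm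
  -- Fourier transform of the derivative
  have hFd : 𝓕 (deriv ⇑f) = fun ξ : ℝ => (2 * π * Complex.I * ξ) • φ ξ :=
    Real.fourier_deriv f.integrable f.differentiable (hd ▸ (SchwartzMap.derivCLM ℝ ℂ f).integrable)
  have hFd2 : 𝓕 (deriv (deriv ⇑f)) = fun ξ : ℝ => (2 * π * Complex.I * ξ) • 𝓕 (deriv ⇑f) ξ :=
    Real.fourier_deriv (hd ▸ (SchwartzMap.derivCLM ℝ ℂ f).integrable)
      (hd ▸ (SchwartzMap.derivCLM ℝ ℂ f).differentiable)
      (hd2 ▸ (SchwartzMap.derivCLM ℝ ℂ (SchwartzMap.derivCLM ℝ ℂ f)).integrable)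
  have hFd2norm : ∀ ξ : ℝ, ‖𝓕 (deriv (deriv ⇑f)) ξ‖ = (2 * π * |ξ|) ^ 2 * ‖φ ξ‖ := by
    intro ξ
    rw [hFd2, hFd]
    simp only [smul_eq_mul, norm_mul, Complex.norm_I, Complex.norm_real, Real.norm_eq_abs,
      Complex.norm_ofNat, mul_one]
    rw [_root_.abs_of_nonneg Real.pi_pos.le]
    ring
  -- integral representations
  have P : cfc (fun w : ℂ => f (s * w.re)) B = ∫ ξ : ℝ, φ ξ • U B (2 * π * s * ξ) :=
    cfc_schwartz hB f s
  have Q : cfc (fun w : ℂ => deriv (⇑f) (s * w.re)) B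
      = ∫ ξ : ℝ, 𝓕 (deriv ⇑f) ξ • U B (2 * π * s * ξ) := by
    rw [show (fun w : ℂ => deriv (⇑f) (s * w.re))
        = fun w : ℂ => (SchwartzMap.derivCLM ℝ ℂ f) (s * w.re) from by rw [← hd],
      cfc_schwartz hB (SchwartzMap.derivCLM ℝ ℂ f) s, ← hd]
  -- integrability
  have h1 : Integrable (fun ξ : ℝ => φ ξ • U B (2 * π * s * ξ)) volume := int_base hB f s
  have h2 : Integrable (fun ξ : ℝ => 𝓕 (deriv ⇑f) ξ • U B (2 * π * s * ξ)) volume := by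
    rw [hd]; exact int_base hB (SchwartzMap.derivCLM ℝ ℂ f) s
  let Rmul : (H →L[ℂ] H) → ((H →L[ℂ] H) →L[ℂ] (H →L[ℂ] H)) :=
    fun y => (ContinuousLinearMap.mul ℂ (H →L[ℂ] H)).flip y
  let Lmul : (H →L[ℂ] H) → ((H →L[ℂ] H) →L[ℂ] (H →L[ℂ] H)) :=
    fun y => ContinuousLinearMap.mul ℂ (H →L[ℂ] H) y
  have hRmul : ∀ y x : H →L[ℂ] H, Rmul y x = x * y := fun y x => rfl
  have hLmul : ∀ y x : H →L[ℂ] H, Lmul y x = y * x := fun y x => rfl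
  have ha1 : Integrable (fun ξ : ℝ => φ ξ • (U B (2 * π * s * ξ) * a)) volume := by
    have := (Rmul a).integrable_comp h1
    simpa only [hRmul, smul_mul_assoc] using this
  have ha2 : Integrable (fun ξ : ℝ => φ ξ • (a * U B (2 * π * s * ξ))) volume := by
    have := (Lmul a).integrable_comp h1
    simpa only [hLmul, mul_smul_comm] using this
  have ha3 : Integrable (fun ξ : ℝ => s • (𝓕 (deriv ⇑f) ξ • (U B (2 * π * s * ξ) * C))) volume := by
    have := ((Rmul C).integrable_comp h2).smul s
    simpa only [hRmul, smul_mul_assoc, Pi.smul_def] using this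
  have ha3' : Integrable (fun ξ : ℝ => s • (𝓕 (deriv ⇑f) ξ • (C * U B (2 * π * s * ξ)))) volume := by
    have := ((Lmul C).integrable_comp h2).smul s
    simpa only [hLmul, mul_smul_comm, Pi.smul_def] using this
  -- algebraic identities for the three integral terms
  have E1 : cfc (fun w : ℂ => f (s * w.re)) B * a
      = ∫ ξ : ℝ, φ ξ • (U B (2 * π * s * ξ) * a) := by
    rw [P, show (∫ ξ : ℝ, φ ξ • U B (2 * π * s * ξ)) * a
        = Rmul a (∫ ξ : ℝ, φ ξ • U B (2 * π * s * ξ)) from rfl,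
      ← ContinuousLinearMap.integral_comp_comm _ h1]
    simp only [hRmul, smul_mul_assoc]
  have E2 : a * cfc (fun w : ℂ => f (s * w.re)) B
      = ∫ ξ : ℝ, φ ξ • (a * U B (2 * π * s * ξ)) := by
    rw [P, show a * (∫ ξ : ℝ, φ ξ • U B (2 * π * s * ξ))
        = Lmul a (∫ ξ : ℝ, φ ξ • U B (2 * π * s * ξ)) from rfl,
      ← ContinuousLinearMap.integral_comp_comm _ h1]
    simp only [hLmul, mul_smul_comm]
  have E3 : s • (cfc (fun w : ℂ => deriv (⇑f) (s * w.re)) B * C)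
      = ∫ ξ : ℝ, s • (𝓕 (deriv ⇑f) ξ • (U B (2 * π * s * ξ) * C)) := by
    rw [Q, show (∫ ξ : ℝ, 𝓕 (deriv ⇑f) ξ • U B (2 * π * s * ξ)) * C
        = Rmul C (∫ ξ : ℝ, 𝓕 (deriv ⇑f) ξ • U B (2 * π * s * ξ)) from rfl,
      ← ContinuousLinearMap.integral_comp_comm _ h2, ← MeasureTheory.integral_smul]
    simp only [hRmul, smul_mul_assoc]
  have E3' : s • (C * cfc (fun w : ℂ => deriv (⇑f) (s * w.re)) B)
      = ∫ ξ : ℝ, s • (𝓕 (deriv ⇑f) ξ • (C * U B (2 * π * s * ξ))) := by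
    rw [Q, show C * (∫ ξ : ℝ, 𝓕 (deriv ⇑f) ξ • U B (2 * π * s * ξ))
        = Lmul C (∫ ξ : ℝ, 𝓕 (deriv ⇑f) ξ • U B (2 * π * s * ξ)) from rfl,
      ← ContinuousLinearMap.integral_comp_comm _ h2, ← MeasureTheory.integral_smul]
    simp only [hLmul, mul_smul_comm]
  -- scalar identity
  have hsc : ∀ (ξ : ℝ) (Z : H →L[ℂ] H),
      s • (𝓕 (deriv ⇑f) ξ • Z) = φ ξ • ((Complex.I * (2 * π * s * ξ)) • Z) := by
    intro ξ Z
    rw [show s • (𝓕 (deriv ⇑f) ξ • Z) = ((s : ℂ) * 𝓕 (deriv ⇑f) ξ) • Z from by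
        rw [mul_smul, show ((s : ℝ) : ℂ) = algebraMap ℝ ℂ s from rfl, algebraMap_smul],
      smul_smul, hFd]
    simp only [smul_eq_mul]
    congr 1
    push_cast
    ring
  -- integrable RHS dominating function
  have hdom : Integrable (fun ξ : ℝ => s ^ 2 * ‖𝓕 (deriv (deriv ⇑f)) ξ‖ * ‖D‖) volume := by
    have : Integrable (𝓕 (deriv (deriv ⇑f))) volume := by
      rw [hd2]
      exact (SchwartzMap.fourierTransformCLM ℂ
        (SchwartzMap.derivCLM ℝ ℂ (SchwartzMap.derivCLM ℝ ℂ f))).integrable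
    exact (this.norm.const_mul (s ^ 2)).mul_const ‖D‖
  have hfinal : (∫ ξ : ℝ, s ^ 2 * ‖𝓕 (deriv (deriv ⇑f)) ξ‖ * ‖D‖)
      = s ^ 2 * (∫ ξ : ℝ, ‖𝓕 (deriv (deriv ⇑f)) ξ‖) * ‖D‖ := by
    rw [MeasureTheory.integral_mul_const, MeasureTheory.integral_const_mul]
  have comb : Integrable (fun ξ : ℝ => φ ξ • (U B (2 * π * s * ξ) * a)
      - φ ξ • (a * U B (2 * π * s * ξ))) volume := ha1.sub ha2
  have hpt : ∀ ξ : ℝ, ‖φ ξ • (U B (2 * π * s * ξ) * a - a * U B (2 * π * s * ξ)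
      - (Complex.I * (2 * π * s * ξ)) • (U B (2 * π * s * ξ) * C))‖
      ≤ s ^ 2 * ‖𝓕 (deriv (deriv ⇑f)) ξ‖ * ‖D‖ := by
    intro ξ
    rw [norm_smul]
    calc ‖φ ξ‖ * ‖U B (2 * π * s * ξ) * a - a * U B (2 * π * s * ξ)
          - (Complex.I * (2 * π * s * ξ)) • (U B (2 * π * s * ξ) * C)‖
        ≤ ‖φ ξ‖ * ((2 * π * s * ξ) ^ 2 * ‖D‖) := by
          apply mul_le_mul_of_nonneg_left _ (norm_nonneg _)
          have := bound2L hB a (2 * π * s * ξ)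
          rw [← hC, ← hD] at this
          push_cast at this ⊢
          exact this
      _ = s ^ 2 * ‖𝓕 (deriv (deriv ⇑f)) ξ‖ * ‖D‖ := by
          rw [hFd2norm ξ]
          rw [show (2 * π * |ξ|) ^ 2 = (2 * π) ^ 2 * ξ ^ 2 from by
            rw [mul_pow, mul_pow, _root_.sq_abs]]
          ring
  have hpt' : ∀ ξ : ℝ, ‖φ ξ • (U B (2 * π * s * ξ) * a - a * U B (2 * π * s * ξ)
      - (Complex.I * (2 * π * s * ξ)) • (C * U B (2 * π * s * ξ)))‖
      ≤ s ^ 2 * ‖𝓕 (deriv (deriv ⇑f)) ξ‖ * ‖D‖ := by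
    intro ξ
    rw [norm_smul]
    calc ‖φ ξ‖ * ‖U B (2 * π * s * ξ) * a - a * U B (2 * π * s * ξ)
          - (Complex.I * (2 * π * s * ξ)) • (C * U B (2 * π * s * ξ))‖
        ≤ ‖φ ξ‖ * ((2 * π * s * ξ) ^ 2 * ‖D‖) := by
          apply mul_le_mul_of_nonneg_left _ (norm_nonneg _)
          have := bound2R hB a (2 * π * s * ξ)
          rw [← hC, ← hD] at this
          push_cast at this ⊢
          exact this
      _ = s ^ 2 * ‖𝓕 (deriv (deriv ⇑f)) ξ‖ * ‖D‖ := by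
          rw [hFd2norm ξ]
          rw [show (2 * π * |ξ|) ^ 2 = (2 * π) ^ 2 * ξ ^ 2 from by
            rw [mul_pow, mul_pow, _root_.sq_abs]]
          ring
  constructor
  · -- left version
    have key : (cfc (fun w : ℂ => f (s * w.re)) B * a - a * cfc (fun w : ℂ => f (s * w.re)) B)
        - s • (cfc (fun w : ℂ => deriv (⇑f) (s * w.re)) B * C)
        = ∫ ξ : ℝ, φ ξ • (U B (2 * π * s * ξ) * a - a * U B (2 * π * s * ξ)
            - (Complex.I * (2 * π * s * ξ)) • (U B (2 * π * s * ξ) * C)) := by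
      rw [E1, E2, E3, ← MeasureTheory.integral_sub ha1 ha2, ← MeasureTheory.integral_sub comb ha3]
      apply MeasureTheory.integral_congr_ae
      apply Filter.Eventually.of_forall
      intro ξ
      show φ ξ • (U B (2 * π * s * ξ) * a) - φ ξ • (a * U B (2 * π * s * ξ))
          - s • (𝓕 (deriv ⇑f) ξ • (U B (2 * π * s * ξ) * C))
          = φ ξ • (U B (2 * π * s * ξ) * a - a * U B (2 * π * s * ξ)
            - (Complex.I * (2 * π * s * ξ)) • (U B (2 * π * s * ξ) * C))
      rw [hsc ξ, smul_sub, smul_sub]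
    rw [key]
    calc ‖∫ ξ : ℝ, φ ξ • (U B (2 * π * s * ξ) * a - a * U B (2 * π * s * ξ)
            - (Complex.I * (2 * π * s * ξ)) • (U B (2 * π * s * ξ) * C))‖
        ≤ ∫ ξ : ℝ, ‖φ ξ • (U B (2 * π * s * ξ) * a - a * U B (2 * π * s * ξ)
            - (Complex.I * (2 * π * s * ξ)) • (U B (2 * π * s * ξ) * C))‖ :=
          MeasureTheory.norm_integral_le_integral_norm _
      _ ≤ ∫ ξ : ℝ, s ^ 2 * ‖𝓕 (deriv (deriv ⇑f)) ξ‖ * ‖D‖ := by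
          exact MeasureTheory.integral_mono_of_nonneg
            (Filter.Eventually.of_forall fun ξ => norm_nonneg _) hdom
            (Filter.Eventually.of_forall hpt)
      _ = s ^ 2 * (∫ ξ : ℝ, ‖𝓕 (deriv (deriv ⇑f)) ξ‖) * ‖D‖ := hfinal
  · -- right version
    have key : (cfc (fun w : ℂ => f (s * w.re)) B * a - a * cfc (fun w : ℂ => f (s * w.re)) B)
        - s • (C * cfc (fun w : ℂ => deriv (⇑f) (s * w.re)) B)
        = ∫ ξ : ℝ, φ ξ • (U B (2 * π * s * ξ) * a - a * U B (2 * π * s * ξ)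
            - (Complex.I * (2 * π * s * ξ)) • (C * U B (2 * π * s * ξ))) := by
      rw [E1, E2, E3', ← MeasureTheory.integral_sub ha1 ha2, ← MeasureTheory.integral_sub comb ha3']
      apply MeasureTheory.integral_congr_ae
      apply Filter.Eventually.of_forall
      intro ξ
      show φ ξ • (U B (2 * π * s * ξ) * a) - φ ξ • (a * U B (2 * π * s * ξ))
          - s • (𝓕 (deriv ⇑f) ξ • (C * U B (2 * π * s * ξ)))
          = φ ξ • (U B (2 * π * s * ξ) * a - a * U B (2 * π * s * ξ)
            - (Complex.I * (2 * π * s * ξ)) • (C * U B (2 * π * s * ξ)))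
      rw [hsc ξ, smul_sub, smul_sub]
    rw [key]
    calc ‖∫ ξ : ℝ, φ ξ • (U B (2 * π * s * ξ) * a - a * U B (2 * π * s * ξ)
            - (Complex.I * (2 * π * s * ξ)) • (C * U B (2 * π * s * ξ)))‖
        ≤ ∫ ξ : ℝ, ‖φ ξ • (U B (2 * π * s * ξ) * a - a * U B (2 * π * s * ξ)
            - (Complex.I * (2 * π * s * ξ)) • (C * U B (2 * π * s * ξ)))‖ :=
          MeasureTheory.norm_integral_le_integral_norm _
      _ ≤ ∫ ξ : ℝ, s ^ 2 * ‖𝓕 (deriv (deriv ⇑f)) ξ‖ * ‖D‖ := by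
          exact MeasureTheory.integral_mono_of_nonneg
            (Filter.Eventually.of_forall fun ξ => norm_nonneg _) hdom
            (Filter.Eventually.of_forall hpt')
      _ = s ^ 2 * (∫ ξ : ℝ, ‖𝓕 (deriv (deriv ⇑f)) ξ‖) * ‖D‖ := hfinal


end Stmt10Aux


/-- For a bounded self-adjoint operator `B`, a bounded operator `a`, a
Schwartz function `f` and `s > 0`:
`‖[f(sB), a] − s f'(sB) [B,a]‖ ≤ s² ‖𝓕(f'')‖₁ ‖[B,[B,a]]‖` and
`‖[f(sB), a] − s [B,a] f'(sB)‖ ≤ s² ‖𝓕(f'')‖₁ ‖[B,[B,a]]‖`,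
where `f(sB)` denotes the continuous functional calculus of `B` applied to `t ↦ f(st)`. -/
theorem stmt10 {H : Type} [NormedAddCommGroup H] [InnerProductSpace ℂ H] [CompleteSpace H]
    (B a : H →L[ℂ] H) (hB : IsSelfAdjoint B) (f : SchwartzMap ℝ ℂ) (s : ℝ) (hs : 0 < s) :
    ‖(cfc (fun w : ℂ => f (s * w.re)) B * a - a * cfc (fun w : ℂ => f (s * w.re)) B)
        - s • (cfc (fun w : ℂ => deriv (⇑f) (s * w.re)) B * (B * a - a * B))‖
      ≤ s ^ 2 * (∫ ξ : ℝ, ‖𝓕 (deriv (deriv ⇑f)) ξ‖) *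
          ‖B * (B * a - a * B) - (B * a - a * B) * B‖ ∧
    ‖(cfc (fun w : ℂ => f (s * w.re)) B * a - a * cfc (fun w : ℂ => f (s * w.re)) B)
        - s • ((B * a - a * B) * cfc (fun w : ℂ => deriv (⇑f) (s * w.re)) B)‖
      ≤ s ^ 2 * (∫ ξ : ℝ, ‖𝓕 (deriv (deriv ⇑f)) ξ‖) *
          ‖B * (B * a - a * B) - (B * a - a * B) * B‖ := by
  exact Stmt10Aux.main hB a f s

end
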